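/- arXiv:1410.5284 — 2 statements merged into one kernel-verified Lean document; each statement's English description precedes it below -/
import Mathlib

section
/- Suppose Assumptions 1 and 2 hold and let δ_j^k := ‖∇f_j(x_j^k) − ∇f_j(x_1^k)‖ for j = 1,…,m. Then for all k ≥ 2 and j = 1,…,m, δ_j^k ≤ r^k · Σ_{i=1}^{j−1} (1 + r^k)^{j−1−i} ‖∇f_i(x_1^k)‖, where r^k = (2Q/m)·γ^k (with the convention that the right-hand side is zero for j = 1). -/
open Finset Filter Classical

local notation "⟪" x ", " y "⟫" => inner (𝕜 := ℝ) x y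

lemma IN.inner_clm {n : ℕ} (M : Matrix (Fin n) (Fin n) ℝ) (x y : EuclideanSpace ℝ (Fin n)) :
    ⟪x, Matrix.toEuclideanCLM (𝕜 := ℝ) M y⟫ =
      dotProduct (star (WithLp.equiv 2 _ x)) (M.mulVec (WithLp.equiv 2 _ y)) := by
  rw [EuclideanSpace.inner_eq_star_dotProduct, Matrix.ofLp_toEuclideanCLM, dotProduct_comm]; rfl

lemma IN.quad_nonneg {n : ℕ} {M : Matrix (Fin n) (Fin n) ℝ} (hM : M.PosSemidef)
    (x : EuclideanSpace ℝ (Fin n)) : 0 ≤ ⟪x, Matrix.toEuclideanCLM (𝕜 := ℝ) M x⟫ := by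
  rw [IN.inner_clm]; exact hM.dotProduct_mulVec_nonneg _

lemma IN.smul_one_psd {n : ℕ} {μ : ℝ} (hμ : 0 ≤ μ) :
    (μ • (1 : Matrix (Fin n) (Fin n) ℝ)).PosSemidef := by
  rw [Matrix.smul_one_eq_diagonal]
  exact Matrix.posSemidef_diagonal_iff.mpr fun i => hμ

lemma IN.clm_smul_one {n : ℕ} (μ : ℝ) :
    Matrix.toEuclideanCLM (𝕜 := ℝ) (μ • (1 : Matrix (Fin n) (Fin n) ℝ)) =
      μ • (1 : EuclideanSpace ℝ (Fin n) →L[ℝ] EuclideanSpace ℝ (Fin n)) := by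
  rw [map_smul, map_one]

lemma IN.quad_lower {n : ℕ} {M : Matrix (Fin n) (Fin n) ℝ} {μ : ℝ}
    (h : (M - μ • 1).PosSemidef) (x : EuclideanSpace ℝ (Fin n)) :
    μ * ‖x‖ ^ 2 ≤ ⟪x, Matrix.toEuclideanCLM (𝕜 := ℝ) M x⟫ := by
  have h0 := IN.quad_nonneg h x
  rw [map_sub, ContinuousLinearMap.sub_apply, inner_sub_right, IN.clm_smul_one] at h0
  simp only [ContinuousLinearMap.smul_apply, ContinuousLinearMap.one_apply,
    real_inner_smul_right] at h0
  rw [real_inner_self_eq_norm_sq] at h0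
  linarith

lemma IN.quad_upper {n : ℕ} {M : Matrix (Fin n) (Fin n) ℝ} {Cb : ℝ}
    (h : (Cb • 1 - M).PosSemidef) (x : EuclideanSpace ℝ (Fin n)) :
    ⟪x, Matrix.toEuclideanCLM (𝕜 := ℝ) M x⟫ ≤ Cb * ‖x‖ ^ 2 := by
  have h0 := IN.quad_nonneg h x
  rw [map_sub, ContinuousLinearMap.sub_apply, inner_sub_right, IN.clm_smul_one] at h0
  simp only [ContinuousLinearMap.smul_apply, ContinuousLinearMap.one_apply,
    real_inner_smul_right] at h0
  rw [real_inner_self_eq_norm_sq] at h0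
  linarith


section
variable {n : ℕ}
set_option maxHeartbeats 800000 in
set_option synthInstance.maxHeartbeats 400000 in
lemma IN.opNorm_le {M : Matrix (Fin n) (Fin n) ℝ} {Cb : ℝ} (hCb : 0 ≤ Cb)
    (hM : M.PosSemidef) (h : (Cb • 1 - M).PosSemidef) :
    ‖Matrix.toEuclideanCLM (𝕜 := ℝ) M‖ ≤ Cb := by
  obtain ⟨B, hB⟩ : ∃ B : Matrix (Fin n) (Fin n) ℝ, M = B.conjTranspose * B := by
    open scoped MatrixOrder in
    obtain ⟨B, hB⟩ := CStarAlgebra.nonneg_iff_eq_star_mul_self.mp hM.nonneg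
    exact ⟨B, hB⟩
  set S := Matrix.toEuclideanCLM (𝕜 := ℝ) B with hS
  have hT : Matrix.toEuclideanCLM (𝕜 := ℝ) M = star S * S := by
    rw [hB, ← Matrix.star_eq_conjTranspose, map_mul, map_star]
  have hSx : ∀ x : EuclideanSpace ℝ (Fin n), ‖S x‖ ≤ Real.sqrt Cb * ‖x‖ := by
    intro x
    have h1 : ⟪x, Matrix.toEuclideanCLM (𝕜 := ℝ) M x⟫ = ‖S x‖ ^ 2 := by
      rw [hT]
      calc ⟪x, (star S * S) x⟫ = ⟪x, (ContinuousLinearMap.adjoint S) (S x)⟫ := by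
            rw [ContinuousLinearMap.star_eq_adjoint]; rfl
        _ = ⟪S x, S x⟫ := ContinuousLinearMap.adjoint_inner_right ..
        _ = ‖S x‖ ^ 2 := real_inner_self_eq_norm_sq _
    have h2 := IN.quad_upper h x
    rw [h1] at h2
    have h3 := Real.sqrt_le_sqrt h2
    rwa [Real.sqrt_sq (norm_nonneg _), Real.sqrt_mul hCb, Real.sqrt_sq (norm_nonneg _)] at h3
  have hSn : ‖S‖ ≤ Real.sqrt Cb := ContinuousLinearMap.opNorm_le_bound _ (Real.sqrt_nonneg _) hSx
  rw [hT]
  calc ‖star S * S‖ ≤ ‖star S‖ * ‖S‖ := norm_mul_le _ _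
    _ = ‖S‖ * ‖S‖ := by rw [ContinuousLinearMap.star_eq_adjoint, LinearIsometryEquiv.norm_map]
    _ ≤ Real.sqrt Cb * Real.sqrt Cb := mul_le_mul hSn hSn (norm_nonneg _) (Real.sqrt_nonneg _)
    _ = Cb := Real.mul_self_sqrt hCb

lemma IN.inv_bound {M : Matrix (Fin n) (Fin n) ℝ} {μ : ℝ} (hμ : 0 < μ)
    (h : (M - μ • 1).PosSemidef) (x : EuclideanSpace ℝ (Fin n)) :
    ‖Matrix.toEuclideanCLM (𝕜 := ℝ) M⁻¹ x‖ ≤ μ⁻¹ * ‖x‖ := by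
  have hPD : M.PosDef := by
    have h2 : (μ • (1 : Matrix (Fin n) (Fin n) ℝ)).PosDef := by
      rw [Matrix.smul_one_eq_diagonal]
      exact Matrix.posDef_diagonal_iff.mpr fun i => hμ
    have h3 := Matrix.PosDef.posSemidef_add h h2
    rwa [sub_add_cancel] at h3
  have hdet : IsUnit M.det := hPD.det_pos.ne'.isUnit
  have hMul : M * M⁻¹ = 1 := Matrix.mul_nonsing_inv _ hdet
  set y := Matrix.toEuclideanCLM (𝕜 := ℝ) M⁻¹ x with hy
  have hTy : Matrix.toEuclideanCLM (𝕜 := ℝ) M y = x := by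
    rw [hy, ← ContinuousLinearMap.mul_apply, ← map_mul, hMul, map_one,
      ContinuousLinearMap.one_apply]
  have h1 : μ * ‖y‖ ^ 2 ≤ ⟪y, x⟫ := by
    have := IN.quad_lower h y
    rwa [hTy] at this
  have h2 : ⟪y, x⟫ ≤ ‖y‖ * ‖x‖ := real_inner_le_norm _ _
  rcases (norm_nonneg y).eq_or_lt with h0 | h0
  · rw [← h0]
    positivity
  · have h4 : μ * ‖y‖ ≤ ‖x‖ := by nlinarith
    calc ‖y‖ = μ⁻¹ * (μ * ‖y‖) := by field_simp
      _ ≤ μ⁻¹ * ‖x‖ := by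
        exact mul_le_mul_of_nonneg_left h4 (by positivity)

end

lemma IN.rec_bound (r : ℝ) (hr : 0 ≤ r) (G D : ℕ → ℝ) (m : ℕ)
    (hG : ∀ i, 0 ≤ G i) (hD0 : ∀ i, 0 ≤ D i)
    (hstep : ∀ j, 1 ≤ j → j ≤ m → D j ≤ r * ∑ i ∈ Finset.Icc 1 (j-1), (G i + D i)) :
    ∀ j, 1 ≤ j → j ≤ m → D j ≤ r * ∑ i ∈ Finset.Icc 1 (j-1), (1+r)^(j-1-i) * G i := by
  have hSP : ∀ t, t ≤ m →
      (∑ i ∈ Finset.Icc 1 t, (G i + D i)) ≤ ∑ i ∈ Finset.Icc 1 t, (1+r)^(t-i) * G i := by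
    intro t
    induction t with
    | zero => intro _; simp
    | succ t ih =>
      intro htm
      have hSnn : 0 ≤ ∑ i ∈ Finset.Icc 1 t, (G i + D i) :=
        Finset.sum_nonneg fun i _ => add_nonneg (hG i) (hD0 i)
      have h1 : D (t+1) ≤ r * ∑ i ∈ Finset.Icc 1 t, (G i + D i) := by
        have h := hstep (t+1) (by omega) htm
        simpa using h
      rw [Finset.sum_Icc_succ_top (by omega : 1 ≤ t+1),
        Finset.sum_Icc_succ_top (by omega : 1 ≤ t+1)]
      have h2 : ∑ i ∈ Finset.Icc 1 t, (1+r)^(t+1-i) * G i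
          = (1+r) * ∑ i ∈ Finset.Icc 1 t, (1+r)^(t-i) * G i := by
        rw [Finset.mul_sum]
        refine Finset.sum_congr rfl fun i hi => ?_
        rw [Finset.mem_Icc] at hi
        rw [show t+1-i = (t-i)+1 by omega, pow_succ]
        ring
      rw [h2, Nat.sub_self, pow_zero, one_mul]
      have h3 := ih (by omega)
      nlinarith [mul_le_mul_of_nonneg_left h3 (by linarith : (0:ℝ) ≤ 1+r)]
  intro j hj1 hjm
  calc D j ≤ r * ∑ i ∈ Finset.Icc 1 (j-1), (G i + D i) := hstep j hj1 hjm
    _ ≤ r * ∑ i ∈ Finset.Icc 1 (j-1), (1+r)^(j-1-i) * G i :=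
        mul_le_mul_of_nonneg_left (hSP (j-1) (by omega)) hr


lemma IN.smul_one_psd' {n : ℕ} {μ : ℝ} (hμ : 0 ≤ μ) :
    (μ • (1 : Matrix (Fin n) (Fin n) ℝ)).PosSemidef := by
  rw [Matrix.smul_one_eq_diagonal]
  exact Matrix.posSemidef_diagonal_iff.mpr fun i => hμ

lemma IN.Hbound {n m : ℕ}
    (hess : ℕ → EuclideanSpace ℝ (Fin n) → Matrix (Fin n) (Fin n) ℝ)
    (x : ℕ → ℕ → EuclideanSpace ℝ (Fin n))
    (H : ℕ → ℕ → Matrix (Fin n) (Fin n) ℝ)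
    (hH0 : H 1 0 = 0)
    (hHnext : ∀ k, 1 ≤ k → H (k+1) 0 = H k m)
    (hHrec : ∀ k, 1 ≤ k → ∀ i ∈ Finset.Icc 1 m, H k i = H k (i-1) + hess i (x k i))
    {c : ℝ} (hc : 0 ≤ c)
    (hlb : ∀ i ∈ Finset.Icc 1 m, ∀ y, (hess i y - c • 1).PosSemidef) :
    ∀ k, 1 ≤ k → ∀ i, i ≤ m →
      (H k i - ((((k-1)*m + i : ℕ) : ℝ) * c) • 1).PosSemidef := by
  have step : ∀ k, 1 ≤ k → ∀ i, i + 1 ≤ m →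
      (H k i - ((((k-1)*m + i : ℕ) : ℝ) * c) • 1).PosSemidef →
      (H k (i+1) - ((((k-1)*m + (i+1) : ℕ) : ℝ) * c) • 1).PosSemidef := by
    intro k hk i him hprev
    have hrec := hHrec k hk (i+1) (by rw [Finset.mem_Icc]; omega)
    rw [Nat.add_sub_cancel] at hrec
    have key : H k (i+1) - ((((k-1)*m + (i+1) : ℕ) : ℝ) * c) • 1
        = (H k i - ((((k-1)*m + i : ℕ) : ℝ) * c) • 1) + (hess (i+1) (x k (i+1)) - c • 1) := by
      rw [hrec]
      push_cast
      module
    rw [key]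
    exact hprev.add (hlb (i+1) (by rw [Finset.mem_Icc]; omega) _)
  intro k hk
  induction k, hk using Nat.le_induction with
  | base =>
    intro i
    induction i with
    | zero => intro _; simp [hH0, Matrix.PosSemidef.zero]
    | succ i ih => intro hi; exact step 1 le_rfl i hi (ih (by omega))
  | succ k hk ih =>
    intro i
    induction i with
    | zero =>
      intro _
      rw [hHnext k hk]
      have e1 : (k+1-1)*m + 0 = (k-1)*m + m := by
        have h2 : k - 1 + 1 = k := by omega
        calc (k+1-1)*m + 0 = k*m := by rw [Nat.add_sub_cancel, Nat.add_zero]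
          _ = ((k-1)+1)*m := by rw [h2]
          _ = (k-1)*m + m := by rw [Nat.succ_mul]
      rw [e1]
      exact ih m le_rfl
    | succ i ihh => intro hi; exact step (k+1) (by omega) i hi (ihh (by omega))

theorem statement8
    (n m : ℕ) (hm : 1 < m)
    (f : ℕ → EuclideanSpace ℝ (Fin n) → ℝ)
    (g : ℕ → EuclideanSpace ℝ (Fin n) → EuclideanSpace ℝ (Fin n))
    (hess : ℕ → EuclideanSpace ℝ (Fin n) → Matrix (Fin n) (Fin n) ℝ)
    (hgrad : ∀ i ∈ Finset.Icc 1 m, ∀ y, HasGradientAt (f i) (g i y) y)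
    (hhess : ∀ i ∈ Finset.Icc 1 m, ∀ y, HasFDerivAt (g i) (Matrix.toEuclideanCLM (𝕜 := ℝ) (hess i y)) y)
    (hcont : ∀ i ∈ Finset.Icc 1 m, Continuous (hess i))
    (α : ℕ → ℝ) (hα : ∀ k, 1 ≤ k → 0 < α k)
    (x : ℕ → ℕ → EuclideanSpace ℝ (Fin n))
    (H : ℕ → ℕ → Matrix (Fin n) (Fin n) ℝ)
    (hH0 : H 1 0 = 0)
    (hHnext : ∀ k, 1 ≤ k → H (k+1) 0 = H k m)
    (hHrec : ∀ k, 1 ≤ k → ∀ i ∈ Finset.Icc 1 m, H k i = H k (i-1) + hess i (x k i))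
    (hxnext : ∀ k, 1 ≤ k → x (k+1) 1 = x k (m+1))
    (hiter : ∀ k, 1 ≤ k → ∀ i ∈ Finset.Icc 1 m,
      x k (i+1) = x k i - α k • (Matrix.toEuclideanCLM (𝕜 := ℝ) (H k i)⁻¹) (g i (x k i)))
    (X : Set (EuclideanSpace ℝ (Fin n))) (hX : IsCompact X)
    (hbound : ∀ k, 1 ≤ k → ∀ i ∈ Finset.Icc 1 m, x k i ∈ X)
    (c C : ℝ) (hc : 0 < c) (hcC : c ≤ C)
    (hlb : ∀ i ∈ Finset.Icc 1 m, ∀ y, (hess i y - c • 1).PosSemidef)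
    (hub : ∀ i ∈ Finset.Icc 1 m, ∀ y, (C • (1 : Matrix (Fin n) (Fin n) ℝ) - hess i y).PosSemidef)
 :
    ∀ k, 2 ≤ k → ∀ j ∈ Finset.Icc 1 m,
      ‖g j (x k j) - g j (x k 1)‖ ≤
        ((2*(C/c)/m) * (α k / k)) *
          ∑ i ∈ Finset.Icc 1 (j-1),
            (1 + (2*(C/c)/m) * (α k / k))^(j-1-i) * ‖g i (x k 1)‖ := by
  intro k hk j hj
  have hm0 : 0 < m := by omega
  have hC : 0 < C := lt_of_lt_of_le hc hcC
  have hk1 : 1 ≤ k := by omega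
  rw [Finset.mem_Icc] at hj
  -- Lipschitz bound for each g i
  have hlip : ∀ i, 1 ≤ i → i ≤ m → ∀ a b : EuclideanSpace ℝ (Fin n),
      ‖g i a - g i b‖ ≤ C * ‖a - b‖ := by
    intro i h1 h2 a b
    have him : i ∈ Finset.Icc 1 m := by rw [Finset.mem_Icc]; exact ⟨h1, h2⟩
    have hbd : ∀ y, ‖Matrix.toEuclideanCLM (𝕜 := ℝ) (hess i y)‖ ≤ C := by
      intro y
      have hpsd : (hess i y).PosSemidef := by
        have h3 := (hlb i him y).add (IN.smul_one_psd hc.le)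
        rwa [sub_add_cancel] at h3
      exact IN.opNorm_le hC.le hpsd (hub i him y)
    exact convex_univ.norm_image_sub_le_of_norm_hasFDerivWithin_le
      (fun y _ => (hhess i him y).hasFDerivWithinAt) (fun y _ => hbd y)
      (Set.mem_univ b) (Set.mem_univ a)
  -- spectral lower bound on H and inverse bound
  have hHlow := IN.Hbound hess x H hH0 hHnext hHrec hc.le hlb
  have hνnat : 0 < (k-1)*m := Nat.mul_pos (by omega) hm0
  set ν : ℝ := (((k-1)*m : ℕ) : ℝ) * c with hν_def
  have hν : 0 < ν := mul_pos (by exact_mod_cast hνnat) hc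
  have hinv : ∀ i, 1 ≤ i → i ≤ m → ∀ z : EuclideanSpace ℝ (Fin n),
      ‖(Matrix.toEuclideanCLM (𝕜 := ℝ) (H k i)⁻¹) z‖ ≤ ν⁻¹ * ‖z‖ := by
    intro i h1 h2 z
    refine IN.inv_bound hν ?_ z
    have hpsd := hHlow k hk1 i h2
    have hμν : ν ≤ (((k-1)*m + i : ℕ) : ℝ) * c := by
      apply mul_le_mul_of_nonneg_right _ hc.le
      exact_mod_cast Nat.le_add_right _ _
    have key : H k i - ν • 1 = (H k i - ((((k-1)*m + i : ℕ) : ℝ) * c) • 1)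
        + (((((k-1)*m + i : ℕ) : ℝ) * c - ν) • 1) := by module
    rw [key]
    exact hpsd.add (IN.smul_one_psd (by linarith))
  -- telescoping bound
  have htel : ∀ j, 1 ≤ j → j ≤ m + 1 →
      ‖x k j - x k 1‖ ≤ α k * ν⁻¹ * ∑ i ∈ Finset.Icc 1 (j-1), ‖g i (x k i)‖ := by
    intro j hj1
    induction j, hj1 using Nat.le_induction with
    | base => intro _; simp
    | succ j hj ih =>
      intro hjm
      have hjm' : j ≤ m := by omega
      have hit := hiter k hk1 j (by rw [Finset.mem_Icc]; exact ⟨hj, hjm'⟩)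
      have hsplit : ∑ i ∈ Finset.Icc 1 (j+1-1), ‖g i (x k i)‖
          = (∑ i ∈ Finset.Icc 1 (j-1), ‖g i (x k i)‖) + ‖g j (x k j)‖ := by
        obtain ⟨t, rfl⟩ : ∃ t, j = t + 1 := ⟨j - 1, by omega⟩
        rw [Nat.add_sub_cancel, Nat.add_sub_cancel,
          Finset.sum_Icc_succ_top (by omega : 1 ≤ t+1)]
      calc ‖x k (j+1) - x k 1‖
          = ‖(x k j - x k 1) - α k • (Matrix.toEuclideanCLM (𝕜 := ℝ) (H k j)⁻¹) (g j (x k j))‖ := by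
            rw [hit, sub_right_comm]
        _ ≤ ‖x k j - x k 1‖ + ‖α k • (Matrix.toEuclideanCLM (𝕜 := ℝ) (H k j)⁻¹) (g j (x k j))‖ :=
            norm_sub_le _ _
        _ ≤ α k * ν⁻¹ * (∑ i ∈ Finset.Icc 1 (j-1), ‖g i (x k i)‖)
              + α k * (ν⁻¹ * ‖g j (x k j)‖) := by
            refine add_le_add (ih (by omega)) ?_
            rw [norm_smul, Real.norm_eq_abs, abs_of_pos (hα k hk1)]
            exact mul_le_mul_of_nonneg_left (hinv j hj hjm' _) (hα k hk1).le
        _ = α k * ν⁻¹ * ((∑ i ∈ Finset.Icc 1 (j-1), ‖g i (x k i)‖) + ‖g j (x k j)‖) := by ring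
        _ = α k * ν⁻¹ * ∑ i ∈ Finset.Icc 1 (j+1-1), ‖g i (x k i)‖ := by rw [hsplit]
  -- constant comparison
  set r : ℝ := (2*(C/c)/m) * (α k / k) with hr_def
  have hkR : (2:ℝ) ≤ (k:ℝ) := by exact_mod_cast hk
  have hαp := hα k hk1
  have hkpos : (0:ℝ) < (k:ℝ) := by linarith
  have hr0 : 0 ≤ r := by positivity
  have hcast : (((k-1)*m : ℕ) : ℝ) = ((k:ℝ) - 1) * m := by
    push_cast [Nat.cast_sub hk1]
    ring
  have hCr : C * (α k * ν⁻¹) ≤ r := by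
    rw [hν_def, hcast, hr_def]
    have h2k : (k:ℝ) ≤ 2*((k:ℝ)-1) := by linarith
    have hk1R : (0:ℝ) < (k:ℝ) - 1 := by linarith
    have expand : C * (α k * ((((k:ℝ)-1)*(m:ℝ)*c)⁻¹)) = (C * α k) / (((k:ℝ)-1)*(m:ℝ)*c) := by
      ring
    have hmR : (0:ℝ) < (m:ℝ) := by exact_mod_cast hm0
    have expand2 : 2*(C/c)/(m:ℝ)*(α k/(k:ℝ)) = (2*C*α k) / (c*(m:ℝ)*(k:ℝ)) := by
      field_simp
    rw [expand, expand2, div_le_div_iff₀ (by positivity) (by positivity)]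
    have base : (C*α k*c*(m:ℝ)) * (k:ℝ) ≤ (C*α k*c*(m:ℝ)) * (2*((k:ℝ)-1)) :=
      mul_le_mul_of_nonneg_left h2k (by positivity)
    nlinarith [base]
  -- final recursion
  have hstep : ∀ j', 1 ≤ j' → j' ≤ m →
      ‖g j' (x k j') - g j' (x k 1)‖ ≤
        r * ∑ i ∈ Finset.Icc 1 (j'-1),
          (‖g i (x k 1)‖ + ‖g i (x k i) - g i (x k 1)‖) := by
    intro j' h1 h2
    have hsum : (∑ i ∈ Finset.Icc 1 (j'-1), ‖g i (x k i)‖)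
        ≤ ∑ i ∈ Finset.Icc 1 (j'-1), (‖g i (x k 1)‖ + ‖g i (x k i) - g i (x k 1)‖) :=
      Finset.sum_le_sum fun i hi => norm_le_norm_add_norm_sub' _ _
    have hsnn : (0:ℝ) ≤ ∑ i ∈ Finset.Icc 1 (j'-1), ‖g i (x k i)‖ :=
      Finset.sum_nonneg fun i _ => norm_nonneg _
    calc ‖g j' (x k j') - g j' (x k 1)‖ ≤ C * ‖x k j' - x k 1‖ := hlip j' h1 h2 _ _
      _ ≤ C * (α k * ν⁻¹ * ∑ i ∈ Finset.Icc 1 (j'-1), ‖g i (x k i)‖) :=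
          mul_le_mul_of_nonneg_left (htel j' h1 (by omega)) hC.le
      _ = (C * (α k * ν⁻¹)) * ∑ i ∈ Finset.Icc 1 (j'-1), ‖g i (x k i)‖ := by ring
      _ ≤ r * ∑ i ∈ Finset.Icc 1 (j'-1), (‖g i (x k 1)‖ + ‖g i (x k i) - g i (x k 1)‖) :=
          mul_le_mul hCr hsum hsnn hr0
  have hfin := IN.rec_bound r hr0 (fun i => ‖g i (x k 1)‖)
    (fun i => ‖g i (x k i) - g i (x k 1)‖) m (fun i => norm_nonneg _)
    (fun i => norm_nonneg _) hstep j hj.1 hj.2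
  simpa using hfin
end

section
/- Suppose Assumptions 1 and 2 hold. Then for all k ≥ 2, the gradient error e^k of the IN method satisfies ‖e^k‖ ≤ ( r^k + 2Q/(km) ) · Σ_{j=2}^m Σ_{i=1}^{j−1} (1 + r^k)^{j−1−i} ‖∇f_i(x_1^k)‖, where r^k = (2Q/m)·γ^k. -/
open Finset Filter Classical

section aux
open Matrix
open scoped MatrixOrder
variable {n : ℕ}

lemma psd_smul_one {t : ℝ} (ht : 0 ≤ t) :
    ((t • (1 : Matrix (Fin n) (Fin n) ℝ))).PosSemidef := by
  rw [Matrix.posSemidef_iff_dotProduct_mulVec]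
  constructor
  · simp [Matrix.IsHermitian, Matrix.conjTranspose_smul]
  · intro y
    have : star y ⬝ᵥ ((t • (1 : Matrix (Fin n) (Fin n) ℝ)) *ᵥ y) = t * (star y ⬝ᵥ y) := by
      rw [Matrix.smul_mulVec, Matrix.one_mulVec, dotProduct_smul, smul_eq_mul]
    rw [this]
    apply mul_nonneg ht
    simp only [dotProduct, Pi.star_apply, star_trivial]
    exact Finset.sum_nonneg fun i _ => mul_self_nonneg _

lemma posdef_smul_one {t : ℝ} (ht : 0 < t) :
    ((t • (1 : Matrix (Fin n) (Fin n) ℝ))).PosDef := by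
  rw [Matrix.posDef_iff_dotProduct_mulVec]
  refine ⟨(psd_smul_one ht.le).1, fun y hy => ?_⟩
  have h1 : star y ⬝ᵥ ((t • (1 : Matrix (Fin n) (Fin n) ℝ)) *ᵥ y) = t * (star y ⬝ᵥ y) := by
    rw [Matrix.smul_mulVec, Matrix.one_mulVec, dotProduct_smul, smul_eq_mul]
  rw [h1]
  apply mul_pos ht
  have h2 : star y ⬝ᵥ y = ∑ i, y i * y i := by
    simp [dotProduct]
  rw [h2]
  obtain ⟨i, hi⟩ := Function.ne_iff.mp hy
  exact Finset.sum_pos' (fun j _ => mul_self_nonneg _)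
    ⟨i, Finset.mem_univ i, mul_self_pos.mpr hi⟩

lemma euclid_dot (M : Matrix (Fin n) (Fin n) ℝ) (v : EuclideanSpace ℝ (Fin n)) :
    (WithLp.equiv 2 (Fin n → ℝ)) ((Matrix.toEuclideanCLM (𝕜 := ℝ) M) v)
      = M *ᵥ (WithLp.equiv 2 (Fin n → ℝ)) v := by
  rfl

lemma normsq_dot (v : EuclideanSpace ℝ (Fin n)) :
    star ((WithLp.equiv 2 (Fin n → ℝ)) v) ⬝ᵥ ((WithLp.equiv 2 (Fin n → ℝ)) v) = ‖v‖^2 := by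
  rw [← real_inner_self_eq_norm_sq, EuclideanSpace.inner_eq_star_dotProduct, dotProduct_comm]
  rfl

lemma opbound {M : Matrix (Fin n) (Fin n) ℝ} {C : ℝ} (hC : 0 ≤ C)
    (hM : M.PosSemidef) (hub : (C • (1 : Matrix (Fin n) (Fin n) ℝ) - M).PosSemidef)
    (v : EuclideanSpace ℝ (Fin n)) :
    ‖(Matrix.toEuclideanCLM (𝕜 := ℝ) M) v‖ ≤ C * ‖v‖ := by
  set u := (WithLp.equiv 2 (Fin n → ℝ)) v with hu
  have h1 : ‖(Matrix.toEuclideanCLM (𝕜 := ℝ) M) v‖^2 = star u ⬝ᵥ ((M * M) *ᵥ u) := by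
    rw [← real_inner_self_eq_norm_sq, EuclideanSpace.inner_eq_star_dotProduct]
    rw [dotProduct_comm, ofLp_toEuclideanCLM, star_trivial, star_trivial, ← Matrix.mulVec_mulVec,
      dotProduct_mulVec, ← vecMul_transpose, ← conjTranspose_eq_transpose_of_trivial, hM.1,
      ← dotProduct_mulVec, ← dotProduct_mulVec]
    rfl
  have hS : (CFC.sqrt M).PosSemidef := (CFC.sqrt_nonneg M).posSemidef
  have hsm := hub.mul_mul_conjTranspose_same (CFC.sqrt M)
  have heq : CFC.sqrt M * (C • (1 : Matrix (Fin n) (Fin n) ℝ) - M) * (CFC.sqrt M)ᴴ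
      = C • M - M * M := by
    have hgen : ∀ S : Matrix (Fin n) (Fin n) ℝ,
        S * (C • (1 : Matrix (Fin n) (Fin n) ℝ) - S * S) * S
          = C • (S * S) - (S * S) * (S * S) := by
      intro S
      simp only [Matrix.mul_sub, Matrix.sub_mul, Matrix.mul_smul, Matrix.smul_mul, mul_one,
        one_mul, Matrix.mul_assoc]
    have h := hgen (CFC.sqrt M)
    rw [CFC.sqrt_mul_sqrt_self M hM.nonneg] at h
    rw [hS.1]
    exact h
  rw [heq] at hsm
  have h2 := hsm.dotProduct_mulVec_nonneg u
  rw [Matrix.sub_mulVec, dotProduct_sub, Matrix.smul_mulVec,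
    dotProduct_smul, smul_eq_mul, sub_nonneg] at h2
  have h3 := hub.dotProduct_mulVec_nonneg u
  rw [Matrix.sub_mulVec, dotProduct_sub, Matrix.smul_mulVec,
    Matrix.one_mulVec, dotProduct_smul, smul_eq_mul, sub_nonneg] at h3
  have key : ‖(Matrix.toEuclideanCLM (𝕜 := ℝ) M) v‖^2 ≤ (C * ‖v‖)^2 := by
    rw [h1, mul_pow, ← normsq_dot v, ← hu]
    calc star u ⬝ᵥ ((M * M) *ᵥ u) ≤ C * (star u ⬝ᵥ (M *ᵥ u)) := h2
      _ ≤ C * (C * (star u ⬝ᵥ u)) := mul_le_mul_of_nonneg_left h3 hC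
      _ = C^2 * (star u ⬝ᵥ u) := by ring
  have := Real.sqrt_le_sqrt key
  rwa [Real.sqrt_sq (norm_nonneg _), Real.sqrt_sq (by positivity)] at this

lemma invbound {M : Matrix (Fin n) (Fin n) ℝ} {t : ℝ} (ht : 0 < t)
    (h : (M - t • (1 : Matrix (Fin n) (Fin n) ℝ)).PosSemidef)
    (v : EuclideanSpace ℝ (Fin n)) :
    ‖(Matrix.toEuclideanCLM (𝕜 := ℝ) M⁻¹) v‖ ≤ t⁻¹ * ‖v‖ := by
  have hMd : M.PosDef := by
    have := Matrix.PosDef.posSemidef_add h (posdef_smul_one ht)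
    rwa [sub_add_cancel] at this
  have : Invertible M := hMd.isUnit.invertible
  set w := (Matrix.toEuclideanCLM (𝕜 := ℝ) M⁻¹) v with hw
  have happ : (Matrix.toEuclideanCLM (𝕜 := ℝ) M) w = v := by
    have hmul : (Matrix.toEuclideanCLM (𝕜 := ℝ) M) * (Matrix.toEuclideanCLM (𝕜 := ℝ) M⁻¹)
        = 1 := by
      rw [← _root_.map_mul, Matrix.mul_inv_of_invertible, _root_.map_one]
    calc (Matrix.toEuclideanCLM (𝕜 := ℝ) M) w
        = ((Matrix.toEuclideanCLM (𝕜 := ℝ) M) * (Matrix.toEuclideanCLM (𝕜 := ℝ) M⁻¹)) v := rfl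
      _ = v := by rw [hmul]; rfl
  set uw := (WithLp.equiv 2 (Fin n → ℝ)) w with huw
  have hMw : M *ᵥ uw = (WithLp.equiv 2 (Fin n → ℝ)) v := by
    rw [huw, ← euclid_dot, happ]
  have h2 := h.dotProduct_mulVec_nonneg uw
  rw [Matrix.sub_mulVec, dotProduct_sub, Matrix.smul_mulVec,
    Matrix.one_mulVec, dotProduct_smul, smul_eq_mul, sub_nonneg, hMw] at h2
  have h3 : star uw ⬝ᵥ (WithLp.equiv 2 (Fin n → ℝ)) v = inner (𝕜 := ℝ) w v :=
    by rw [EuclideanSpace.inner_eq_star_dotProduct, dotProduct_comm]; rfl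
  have h4 : inner (𝕜 := ℝ) w v ≤ ‖w‖ * ‖v‖ := real_inner_le_norm w v
  have h5 : star uw ⬝ᵥ uw = ‖w‖^2 := normsq_dot w
  have h6 : t * ‖w‖^2 ≤ ‖w‖ * ‖v‖ := by
    rw [← h5]; exact le_trans h2 (h3 ▸ h4)
  rcases eq_or_lt_of_le (norm_nonneg w) with h0 | h0
  · rw [← h0]; positivity
  · rw [inv_mul_eq_div, le_div_iff₀ ht]
    nlinarith

lemma lipbound {g : EuclideanSpace ℝ (Fin n) → EuclideanSpace ℝ (Fin n)}
    {h : EuclideanSpace ℝ (Fin n) → Matrix (Fin n) (Fin n) ℝ} {C : ℝ}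
    (hg : ∀ y, HasFDerivAt g (Matrix.toEuclideanCLM (𝕜 := ℝ) (h y)) y)
    (hb : ∀ y w, ‖(Matrix.toEuclideanCLM (𝕜 := ℝ) (h y)) w‖ ≤ C * ‖w‖)
    (hC : 0 ≤ C) (p q : EuclideanSpace ℝ (Fin n)) : ‖g p - g q‖ ≤ C * ‖p - q‖ :=
  Convex.norm_image_sub_le_of_norm_hasFDerivWithin_le
    (fun y _ => (hg y).hasFDerivWithinAt)
    (fun y _ => ContinuousLinearMap.opNorm_le_bound _ hC (hb y)) convex_univ trivial trivial

end aux

theorem statement9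
    (n m : ℕ) (hm : 1 < m)
    (f : ℕ → EuclideanSpace ℝ (Fin n) → ℝ)
    (g : ℕ → EuclideanSpace ℝ (Fin n) → EuclideanSpace ℝ (Fin n))
    (hess : ℕ → EuclideanSpace ℝ (Fin n) → Matrix (Fin n) (Fin n) ℝ)
    (hgrad : ∀ i ∈ Finset.Icc 1 m, ∀ y, HasGradientAt (f i) (g i y) y)
    (hhess : ∀ i ∈ Finset.Icc 1 m, ∀ y, HasFDerivAt (g i) (Matrix.toEuclideanCLM (𝕜 := ℝ) (hess i y)) y)
    (hcont : ∀ i ∈ Finset.Icc 1 m, Continuous (hess i))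
    (α : ℕ → ℝ) (hα : ∀ k, 1 ≤ k → 0 < α k)
    (x : ℕ → ℕ → EuclideanSpace ℝ (Fin n))
    (H : ℕ → ℕ → Matrix (Fin n) (Fin n) ℝ)
    (hH0 : H 1 0 = 0)
    (hHnext : ∀ k, 1 ≤ k → H (k+1) 0 = H k m)
    (hHrec : ∀ k, 1 ≤ k → ∀ i ∈ Finset.Icc 1 m, H k i = H k (i-1) + hess i (x k i))
    (hxnext : ∀ k, 1 ≤ k → x (k+1) 1 = x k (m+1))
    (hiter : ∀ k, 1 ≤ k → ∀ i ∈ Finset.Icc 1 m,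
      x k (i+1) = x k i - α k • (Matrix.toEuclideanCLM (𝕜 := ℝ) (H k i)⁻¹) (g i (x k i)))
    (X : Set (EuclideanSpace ℝ (Fin n))) (hX : IsCompact X)
    (hbound : ∀ k, 1 ≤ k → ∀ i ∈ Finset.Icc 1 m, x k i ∈ X)
    (c C : ℝ) (hc : 0 < c) (hcC : c ≤ C)
    (hlb : ∀ i ∈ Finset.Icc 1 m, ∀ y, (hess i y - c • 1).PosSemidef)
    (hub : ∀ i ∈ Finset.Icc 1 m, ∀ y, (C • (1 : Matrix (Fin n) (Fin n) ℝ) - hess i y).PosSemidef)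
 :
    ∀ k, 2 ≤ k →
      ‖∑ j ∈ Finset.Icc 1 m, (g j (x k j) - g j (x k 1)
          + (α k)⁻¹ • (Matrix.toEuclideanCLM (𝕜 := ℝ) (hess j (x k j))) (x k 1 - x k j))‖ ≤
        ((2*(C/c)/m) * (α k / k) + 2*(C/c)/((k:ℝ)*m)) *
          ∑ j ∈ Finset.Icc 2 m, ∑ i ∈ Finset.Icc 1 (j-1),
            (1 + (2*(C/c)/m) * (α k / k))^(j-1-i) * ‖g i (x k 1)‖ := by
  intro k hk
  have hm0 : 0 < m := by omega
  have hk1 : 1 ≤ k := by omega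
  have ha : 0 < α k := hα k hk1
  have hC : 0 < C := lt_of_lt_of_le hc hcC
  have hkR : (2:ℝ) ≤ (k:ℝ) := by exact_mod_cast hk
  have hmR : (2:ℝ) ≤ (m:ℝ) := by exact_mod_cast hm
  have hkR0 : (0:ℝ) < (k:ℝ) := by linarith
  have hmR0 : (0:ℝ) < (m:ℝ) := by linarith
  set a := α k with ha_def
  set r : ℝ := (2*(C/c)/m) * (a / k) with hr_def
  set A : ℝ := 2*(C/c)/((k:ℝ)*m) with hA_def
  set β : ℝ := 2*a/(k*m*c) with hβ_def
  have hβpos : 0 < β := by rw [hβ_def]; positivity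
  have hrβ : r = C * β := by rw [hr_def, hβ_def]; field_simp
  have hr0 : 0 < r := by rw [hrβ]; positivity
  have hA0 : 0 < A := by rw [hA_def]; positivity
  have hcoef : C * (1 + a⁻¹) * β = r + A := by
    rw [hrβ, hβ_def, hA_def]; field_simp
  -- Hessian facts
  have hpsd : ∀ i ∈ Finset.Icc 1 m, ∀ y, (hess i y).PosSemidef := by
    intro i hi y
    have := Matrix.PosSemidef.add (hlb i hi y) (psd_smul_one hc.le)
    rwa [sub_add_cancel] at this
  have hessop : ∀ i ∈ Finset.Icc 1 m, ∀ y w,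
      ‖(Matrix.toEuclideanCLM (𝕜 := ℝ) (hess i y)) w‖ ≤ C * ‖w‖ :=
    fun i hi y w => opbound hC.le (hpsd i hi y) (hub i hi y) w
  have glip : ∀ i ∈ Finset.Icc 1 m, ∀ p q, ‖g i p - g i q‖ ≤ C * ‖p - q‖ :=
    fun i hi p q => lipbound (hhess i hi) (hessop i hi) hC.le p q
  -- lower bounds on H
  have Hstep : ∀ K, 1 ≤ K → ∀ t : ℝ,
      (H K 0 - t • (1 : Matrix (Fin n) (Fin n) ℝ)).PosSemidef →
      ∀ i, i ≤ m → (H K i - (t + i*c) • (1 : Matrix (Fin n) (Fin n) ℝ)).PosSemidef := by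
    intro K hK t h0 i
    induction i with
    | zero => intro _; simpa using h0
    | succ i ih =>
      intro hi1
      have hmem : i+1 ∈ Finset.Icc 1 m := by simp only [Finset.mem_Icc]; omega
      have hrec := hHrec K hK (i+1) hmem
      simp only [Nat.add_sub_cancel] at hrec
      have hcast : (t + ((i+1 : ℕ) : ℝ)*c) • (1 : Matrix (Fin n) (Fin n) ℝ)
          = (t + (i : ℝ)*c) • 1 + c • 1 := by
        push_cast
        rw [← add_smul]
        congr 1
        ring
      have heqm : H K i + hess (i+1) (x K (i+1)) - (t + ((i+1 : ℕ) : ℝ)*c) • 1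
          = (H K i - (t + (i : ℝ)*c) • (1 : Matrix (Fin n) (Fin n) ℝ))
            + (hess (i+1) (x K (i+1)) - c • 1) := by
        rw [hcast]; abel
      rw [hrec, heqm]
      exact Matrix.PosSemidef.add (ih (by omega)) (hlb (i+1) hmem (x K (i+1)))
  have Hlow0 : ∀ K, 1 ≤ K →
      (H K 0 - ((((K-1)*m : ℕ) : ℝ)*c) • (1 : Matrix (Fin n) (Fin n) ℝ)).PosSemidef := by
    intro K hK
    induction K, hK using Nat.le_induction with
    | base =>
      simp only [show (1-1)*m = 0 from by omega, Nat.cast_zero, zero_mul, zero_smul,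
        sub_zero, hH0]
      exact Matrix.PosSemidef.zero
    | succ K hK ih =>
      rw [hHnext K hK]
      have hcoe : ((((K+1-1)*m : ℕ)) : ℝ)*c = ((((K-1)*m : ℕ)) : ℝ)*c + (m : ℝ)*c := by
        have h1 : K+1-1 = K := by omega
        rw [h1]
        push_cast [Nat.cast_sub hK]
        ring
      rw [hcoe]
      exact Hstep K hK _ ih m le_rfl
  set lam : ℝ := (((k-1)*m : ℕ) : ℝ)*c with hlam_def
  have hlampos : 0 < lam := by
    rw [hlam_def]
    have h1 : 0 < (k-1)*m := Nat.mul_pos (by omega) hm0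
    have h2 : (0:ℝ) < (((k-1)*m : ℕ) : ℝ) := by exact_mod_cast h1
    positivity
  have Hlowi : ∀ i ∈ Finset.Icc 1 m,
      (H k i - lam • (1 : Matrix (Fin n) (Fin n) ℝ)).PosSemidef := by
    intro i hi
    have him : i ≤ m := (Finset.mem_Icc.mp hi).2
    have h1 := Hstep k hk1 _ (Hlow0 k hk1) i him
    have heq : H k i - lam • (1 : Matrix (Fin n) (Fin n) ℝ)
        = (H k i - (lam + (i : ℝ)*c) • 1) + ((i : ℝ)*c) • 1 := by
      rw [add_smul]; abel
    rw [heq]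
    exact Matrix.PosSemidef.add h1 (psd_smul_one (by positivity))
  have hinv : ∀ i ∈ Finset.Icc 1 m, ∀ v,
      ‖(Matrix.toEuclideanCLM (𝕜 := ℝ) (H k i)⁻¹) v‖ ≤ lam⁻¹ * ‖v‖ :=
    fun i hi v => invbound hlampos (Hlowi i hi) v
  have halam : a * lam⁻¹ ≤ β := by
    have hlameq : lam = ((k:ℝ)-1)*((m:ℝ)*c) := by
      rw [hlam_def]
      push_cast [Nat.cast_sub hk1]
      ring
    have hpos1 : (0:ℝ) < ((k:ℝ)-1)*((m:ℝ)*c) := by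
      apply mul_pos (by linarith) (by positivity)
    rw [hβ_def, hlameq, ← div_eq_mul_inv, div_le_div_iff₀ hpos1 (by positivity)]
    nlinarith [mul_nonneg (mul_nonneg ha.le (mul_pos hmR0 hc).le) (by linarith : (0:ℝ) ≤ (k:ℝ)-2)]
  -- step bound
  have sstep : ∀ i ∈ Finset.Icc 1 m, ‖x k (i+1) - x k i‖ ≤ β * ‖g i (x k i)‖ := by
    intro i hi
    rw [hiter k hk1 i hi, sub_sub_cancel_left, norm_neg, norm_smul, Real.norm_eq_abs,
      abs_of_pos ha]
    calc a * ‖(Matrix.toEuclideanCLM (𝕜 := ℝ) (H k i)⁻¹) (g i (x k i))‖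
        ≤ a * (lam⁻¹ * ‖g i (x k i)‖) := mul_le_mul_of_nonneg_left (hinv i hi _) ha.le
      _ = (a * lam⁻¹) * ‖g i (x k i)‖ := by ring
      _ ≤ β * ‖g i (x k i)‖ := mul_le_mul_of_nonneg_right halam (norm_nonneg _)
  -- distance bound
  have dbound : ∀ p, p + 1 ≤ m →
      ‖x k (p+1) - x k 1‖ ≤ β * ∑ i ∈ Finset.Icc 1 p, ‖g i (x k i)‖ := by
    intro p
    induction p with
    | zero => intro _; simp
    | succ p ih =>
      intro hp
      have hmem : p+1 ∈ Finset.Icc 1 m := by simp only [Finset.mem_Icc]; omega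
      calc ‖x k (p+1+1) - x k 1‖
          ≤ ‖x k (p+1+1) - x k (p+1)‖ + ‖x k (p+1) - x k 1‖ :=
            norm_sub_le_norm_sub_add_norm_sub _ _ _
        _ ≤ β * ‖g (p+1) (x k (p+1))‖ + β * ∑ i ∈ Finset.Icc 1 p, ‖g i (x k i)‖ :=
            add_le_add (sstep (p+1) hmem) (ih (by omega))
        _ = β * ∑ i ∈ Finset.Icc 1 (p+1), ‖g i (x k i)‖ := by
            rw [Finset.sum_Icc_succ_top (by omega : 1 ≤ p+1)]
            ring
  -- gradient growth bound
  have wb : ∀ p, p + 1 ≤ m → ‖g (p+1) (x k (p+1))‖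
      ≤ ‖g (p+1) (x k 1)‖ + r * ∑ i ∈ Finset.Icc 1 p, ‖g i (x k i)‖ := by
    intro p hp
    have hmem : p+1 ∈ Finset.Icc 1 m := by simp only [Finset.mem_Icc]; omega
    have h1 : ‖g (p+1) (x k (p+1))‖
        ≤ ‖g (p+1) (x k 1)‖ + ‖g (p+1) (x k (p+1)) - g (p+1) (x k 1)‖ := by
      have h := norm_add_le (g (p+1) (x k 1)) (g (p+1) (x k (p+1)) - g (p+1) (x k 1))
      rwa [add_sub_cancel] at h
    have h2 : ‖g (p+1) (x k (p+1)) - g (p+1) (x k 1)‖ ≤ C * ‖x k (p+1) - x k 1‖ :=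
      glip (p+1) hmem _ _
    have h3 : C * ‖x k (p+1) - x k 1‖ ≤ C * (β * ∑ i ∈ Finset.Icc 1 p, ‖g i (x k i)‖) :=
      mul_le_mul_of_nonneg_left (dbound p hp) hC.le
    have h4 : C * (β * ∑ i ∈ Finset.Icc 1 p, ‖g i (x k i)‖)
        = r * ∑ i ∈ Finset.Icc 1 p, ‖g i (x k i)‖ := by rw [hrβ]; ring
    linarith
  -- sum comparison
  have ST : ∀ p, p ≤ m → ∑ i ∈ Finset.Icc 1 p, ‖g i (x k i)‖
      ≤ ∑ i ∈ Finset.Icc 1 p, (1+r)^(p-i) * ‖g i (x k 1)‖ := by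
    intro p
    induction p with
    | zero => intro _; simp
    | succ p ih =>
      intro hp
      have ihm := ih (by omega)
      have hw := wb p (by omega)
      have hrr : (1+r) * (∑ i ∈ Finset.Icc 1 p, ‖g i (x k i)‖)
          = ∑ i ∈ Finset.Icc 1 p, ‖g i (x k i)‖
            + r * ∑ i ∈ Finset.Icc 1 p, ‖g i (x k i)‖ := by ring
      have step1 : ∑ i ∈ Finset.Icc 1 (p+1), ‖g i (x k i)‖
          ≤ (1+r) * (∑ i ∈ Finset.Icc 1 p, ‖g i (x k i)‖) + ‖g (p+1) (x k 1)‖ := by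
        rw [Finset.sum_Icc_succ_top (by omega : 1 ≤ p+1)]
        linarith
      have step2 : (1+r) * (∑ i ∈ Finset.Icc 1 p, ‖g i (x k i)‖)
          ≤ (1+r) * ∑ i ∈ Finset.Icc 1 p, (1+r)^(p-i) * ‖g i (x k 1)‖ :=
        mul_le_mul_of_nonneg_left ihm (by linarith)
      have step3 : (1+r) * (∑ i ∈ Finset.Icc 1 p, (1+r)^(p-i) * ‖g i (x k 1)‖)
            + ‖g (p+1) (x k 1)‖
          = ∑ i ∈ Finset.Icc 1 (p+1), (1+r)^(p+1-i) * ‖g i (x k 1)‖ := by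
        rw [Finset.sum_Icc_succ_top (by omega : 1 ≤ p+1), Nat.sub_self, pow_zero, one_mul,
          Finset.mul_sum]
        congr 1
        apply Finset.sum_congr rfl
        intro i hi
        have hip : i ≤ p := (Finset.mem_Icc.mp hi).2
        have hsub : p + 1 - i = (p - i) + 1 := by omega
        rw [hsub, pow_succ]
        ring
      linarith
  -- error term bound
  have eb : ∀ p, p + 1 ≤ m →
      ‖g (p+1) (x k (p+1)) - g (p+1) (x k 1)
        + a⁻¹ • (Matrix.toEuclideanCLM (𝕜 := ℝ) (hess (p+1) (x k (p+1)))) (x k 1 - x k (p+1))‖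
      ≤ (r + A) * ∑ i ∈ Finset.Icc 1 p, (1+r)^(p-i) * ‖g i (x k 1)‖ := by
    intro p hp
    have hmem : p+1 ∈ Finset.Icc 1 m := by simp only [Finset.mem_Icc]; omega
    have h1 : ‖g (p+1) (x k (p+1)) - g (p+1) (x k 1)‖ ≤ C * ‖x k (p+1) - x k 1‖ :=
      glip (p+1) hmem _ _
    have h2 : ‖a⁻¹ • (Matrix.toEuclideanCLM (𝕜 := ℝ) (hess (p+1) (x k (p+1)))) (x k 1 - x k (p+1))‖
        ≤ a⁻¹ * (C * ‖x k (p+1) - x k 1‖) := by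
      rw [norm_smul, Real.norm_eq_abs, abs_of_pos (inv_pos.mpr ha)]
      apply mul_le_mul_of_nonneg_left _ (inv_pos.mpr ha).le
      have h := hessop (p+1) hmem (x k (p+1)) (x k 1 - x k (p+1))
      rwa [norm_sub_rev (x k 1)] at h
    have htri := norm_add_le (g (p+1) (x k (p+1)) - g (p+1) (x k 1))
      (a⁻¹ • (Matrix.toEuclideanCLM (𝕜 := ℝ) (hess (p+1) (x k (p+1)))) (x k 1 - x k (p+1)))
    have hd := dbound p hp
    have hST := ST p (by omega)
    have hc1 : C * ‖x k (p+1) - x k 1‖ + a⁻¹ * (C * ‖x k (p+1) - x k 1‖)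
        = C * (1 + a⁻¹) * ‖x k (p+1) - x k 1‖ := by ring
    have hc2 : C * (1 + a⁻¹) * ‖x k (p+1) - x k 1‖
        ≤ C * (1 + a⁻¹) * (β * ∑ i ∈ Finset.Icc 1 p, ‖g i (x k i)‖) := by
      apply mul_le_mul_of_nonneg_left hd
      have : 0 < a⁻¹ := inv_pos.mpr ha
      positivity
    have hc3 : C * (1 + a⁻¹) * (β * ∑ i ∈ Finset.Icc 1 p, ‖g i (x k i)‖)
        = (r + A) * ∑ i ∈ Finset.Icc 1 p, ‖g i (x k i)‖ := by
      rw [← hcoef]; ring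
    have hc4 : (r + A) * (∑ i ∈ Finset.Icc 1 p, ‖g i (x k i)‖)
        ≤ (r + A) * ∑ i ∈ Finset.Icc 1 p, (1+r)^(p-i) * ‖g i (x k 1)‖ :=
      mul_le_mul_of_nonneg_left hST (by linarith)
    linarith
  -- assemble
  have hsplit : ∑ j ∈ Finset.Icc 1 m, ‖g j (x k j) - g j (x k 1)
        + a⁻¹ • (Matrix.toEuclideanCLM (𝕜 := ℝ) (hess j (x k j))) (x k 1 - x k j)‖
      = ∑ j ∈ Finset.Icc 2 m, ‖g j (x k j) - g j (x k 1)
        + a⁻¹ • (Matrix.toEuclideanCLM (𝕜 := ℝ) (hess j (x k j))) (x k 1 - x k j)‖ := by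
    refine (Finset.sum_subset (Finset.Icc_subset_Icc (by omega) le_rfl) ?_).symm
    intro j hj hnj
    have hj1 : j = 1 := by
      simp only [Finset.mem_Icc] at hj hnj
      omega
    subst hj1
    simp
  calc ‖∑ j ∈ Finset.Icc 1 m, (g j (x k j) - g j (x k 1)
        + a⁻¹ • (Matrix.toEuclideanCLM (𝕜 := ℝ) (hess j (x k j))) (x k 1 - x k j))‖
      ≤ ∑ j ∈ Finset.Icc 1 m, ‖g j (x k j) - g j (x k 1)
        + a⁻¹ • (Matrix.toEuclideanCLM (𝕜 := ℝ) (hess j (x k j))) (x k 1 - x k j)‖ :=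
        norm_sum_le _ _
    _ = ∑ j ∈ Finset.Icc 2 m, ‖g j (x k j) - g j (x k 1)
        + a⁻¹ • (Matrix.toEuclideanCLM (𝕜 := ℝ) (hess j (x k j))) (x k 1 - x k j)‖ := hsplit
    _ ≤ ∑ j ∈ Finset.Icc 2 m, (r + A) * ∑ i ∈ Finset.Icc 1 (j-1),
          (1+r)^(j-1-i) * ‖g i (x k 1)‖ := by
        apply Finset.sum_le_sum
        intro j hj
        have hj2 : 2 ≤ j ∧ j ≤ m := Finset.mem_Icc.mp hj
        obtain ⟨p, rfl⟩ : ∃ p, j = p + 1 := ⟨j-1, by omega⟩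
        simp only [Nat.add_sub_cancel]
        exact eb p (by omega)
    _ = (r + A) * ∑ j ∈ Finset.Icc 2 m, ∑ i ∈ Finset.Icc 1 (j-1),
          (1+r)^(j-1-i) * ‖g i (x k 1)‖ := (Finset.mul_sum _ _ _).symm
end
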